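/- Let J = S \ {s_i : i ∈ I}. Every maximal valid firing sequence in the Modified Kostant Game with active set I (one that cannot be extended, i.e., no vertex is sad in the final configuration) has length exactly ℓ(w_0^J) = |Φ^+ \ Φ_J^+|, where w_0^J is the unique longest element of W^J; moreover, every maximal valid firing sequence (i_1,…,i_m) satisfies s_{i_m} ⋯ s_{i_1} = w_0^J, so all maximal valid firing sequences terminate in one and the same final configuration. -/

import Mathlib

open scoped Classical RealInnerProductSpace

noncomputable section

variable {n d : ℕ}

/-- The pairing `⟨β, γ^∨⟩ = 2(β,γ)/(γ,γ)` of a vector with a coroot. -/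
def rsPair (β γ : EuclideanSpace ℝ (Fin d)) : ℝ := 2 * ⟪β, γ⟫ / ⟪γ, γ⟫

/-- The coroot `γ^∨ = 2γ/(γ,γ)`. -/
def rsCoroot (γ : EuclideanSpace ℝ (Fin d)) : EuclideanSpace ℝ (Fin d) :=
  (2 / ⟪γ, γ⟫) • γ

/-- `⟨·, γ^∨⟩` as a linear functional. -/
def corootForm (γ : EuclideanSpace ℝ (Fin d)) : EuclideanSpace ℝ (Fin d) →ₗ[ℝ] ℝ where
  toFun x := 2 * ⟪x, γ⟫ / ⟪γ, γ⟫
  map_add' x y := by simp only [inner_add_left]; ring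
  map_smul' c x := by simp only [real_inner_smul_left, RingHom.id_apply, smul_eq_mul]; ring

/-- A finite reduced crystallographic root system in the Euclidean space `ℝ^d`, together with a
chosen base of simple roots `α 0, …, α (n-1)`: every root is an integral linear combination of
the simple roots with all coefficients nonnegative or all nonpositive. -/
structure RootSystemBase (n d : ℕ) : Type where
  Φ : Finset (EuclideanSpace ℝ (Fin d))
  α : Fin n → EuclideanSpace ℝ (Fin d)
  α_mem : ∀ i, α i ∈ Φ
  nonzero : ∀ β ∈ Φ, β ≠ 0
  reduced : ∀ β ∈ Φ, ∀ t : ℝ, t • β ∈ Φ → t = 1 ∨ t = -1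
  crystallographic : ∀ β ∈ Φ, ∀ γ ∈ Φ, ∃ k : ℤ, rsPair β γ = (k : ℝ)
  reflClosed : ∀ β ∈ Φ, ∀ γ ∈ Φ, β - rsPair β γ • γ ∈ Φ
  indep : LinearIndependent ℝ α
  base : ∀ β ∈ Φ, ∃ c : Fin n → ℤ,
    β = ∑ i, (c i : ℝ) • α i ∧ ((∀ i, 0 ≤ c i) ∨ (∀ i, c i ≤ 0))

/-- The extended space `E' = E ⊕ ℝ^I`. -/
abbrev ExtSp (n d : ℕ) (I : Finset (Fin n)) : Type :=
  EuclideanSpace ℝ (Fin d) × ({p : Fin n // p ∈ I} → ℝ)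

/-- The total source vector `β = ∑_{p ∈ I} β_p` in the extended space. -/
def betaVec (n d : ℕ) (I : Finset (Fin n)) : ExtSp n d I := (0, fun _ => 1)

namespace RootSystemBase

variable (R : RootSystemBase n d)

lemma alpha_ne_zero (i : Fin n) : R.α i ≠ 0 := R.nonzero _ (R.α_mem i)

lemma inner_alpha_ne_zero (i : Fin n) : ⟪R.α i, R.α i⟫ ≠ 0 := fun h =>
  R.alpha_ne_zero i ((inner_self_eq_zero (𝕜 := ℝ)).mp h)

lemma corootForm_alpha_self (i : Fin n) : corootForm (R.α i) (R.α i) = 2 := by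
  have h2 := R.inner_alpha_ne_zero i
  show 2 * ⟪R.α i, R.α i⟫ / ⟪R.α i, R.α i⟫ = 2
  rw [mul_div_assoc, div_self h2, mul_one]

/-- The simple reflection `s_i : x ↦ x - ⟨x, α_i^∨⟩ α_i` as a linear automorphism of `E`. -/
def sRefl (i : Fin n) :
    EuclideanSpace ℝ (Fin d) ≃ₗ[ℝ] EuclideanSpace ℝ (Fin d) :=
  Module.reflection (R.corootForm_alpha_self i)

/-- The Weyl group `W`, as the subgroup of linear automorphisms of `E` generated by the
simple reflections. -/
def weyl : Subgroup (EuclideanSpace ℝ (Fin d) ≃ₗ[ℝ] EuclideanSpace ℝ (Fin d)) :=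
  Subgroup.closure (Set.range R.sRefl)

/-- `wordProd [i₁, …, i_t] = s_{i₁} ⋯ s_{i_t}`. -/
def wordProd (l : List (Fin n)) :
    EuclideanSpace ℝ (Fin d) ≃ₗ[ℝ] EuclideanSpace ℝ (Fin d) :=
  (l.map R.sRefl).prod

/-- The Weyl group element `s_{i_t} ⋯ s_{i_1}` associated to the firing sequence
`(i_1, …, i_t)`. -/
def seqProd (l : List (Fin n)) :
    EuclideanSpace ℝ (Fin d) ≃ₗ[ℝ] EuclideanSpace ℝ (Fin d) :=
  (l.reverse.map R.sRefl).prod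

/-- The length function `ℓ` of the Coxeter system `(W, S)`: the minimal number of simple
reflections needed to express `w`. -/
def len (w : EuclideanSpace ℝ (Fin d) ≃ₗ[ℝ] EuclideanSpace ℝ (Fin d)) : ℕ :=
  sInf {t | ∃ l : List (Fin n), l.length = t ∧ R.wordProd l = w}

/-- The set `W^J` of minimal length representatives of `W/W_J`, for `J = S \ {s_i : i ∈ I}`:
those `w ∈ W` with `ℓ(w s_j) > ℓ(w)` for all `j ∉ I`. -/
def minReps (I : Finset (Fin n)) :
    Set (EuclideanSpace ℝ (Fin d) ≃ₗ[ℝ] EuclideanSpace ℝ (Fin d)) :=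
  {w | w ∈ R.weyl ∧ ∀ j, j ∉ I → R.len w < R.len (w * R.sRefl j)}

/-- The Cartan matrix `a_{uv} = ⟨α_u, α_v^∨⟩` (an integer by crystallinity). -/
def cartan (u v : Fin n) : ℤ := ⌊rsPair (R.α u) (R.α v)⌋

/-- The set `Φ⁺` of positive roots. -/
def posRoots : Finset (EuclideanSpace ℝ (Fin d)) :=
  R.Φ.filter fun β => ∃ c : Fin n → ℤ, β = ∑ i, (c i : ℝ) • R.α i ∧ ∀ i, 0 ≤ c i

/-- The set `Φ_P⁺` of positive roots lying in the span of the simple roots `α_j`, `j ∈ P`. -/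
def parPos (P : Finset (Fin n)) : Finset (EuclideanSpace ℝ (Fin d)) :=
  R.posRoots.filter fun β => β ∈ Submodule.span ℝ (R.α '' (P : Set (Fin n)))

/-- `∑_{u ≠ v} (−a_{uv}) c_u + [v ∈ I]`. -/
def chipBound (I : Finset (Fin n)) (c : Fin n → ℤ) (v : Fin n) : ℤ :=
  (∑ u ∈ Finset.univ.erase v, -(R.cartan u v) * c u) + (if v ∈ I then 1 else 0)

/-- Vertex `v` is sad in the configuration `c` (Modified Kostant Game with active set `I`). -/
def Sad (I : Finset (Fin n)) (c : Fin n → ℤ) (v : Fin n) : Prop :=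
  2 * c v < R.chipBound I c v

/-- Firing vertex `v`. -/
def fire (I : Finset (Fin n)) (c : Fin n → ℤ) (v : Fin n) : Fin n → ℤ :=
  Function.update c v (R.chipBound I c v - c v)

end RootSystemBase

/-- `ValidFrom R I c l`: starting from the configuration `c`, the sequence `l` fires a sad
vertex at each step. -/
def RootSystemBase.ValidFrom (R : RootSystemBase n d) (I : Finset (Fin n)) :
    (Fin n → ℤ) → List (Fin n) → Prop
  | _, [] => True
  | c, v :: l => R.Sad I c v ∧ RootSystemBase.ValidFrom R I (R.fire I c v) l

namespace RootSystemBase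

variable (R : RootSystemBase n d)

/-- A valid firing sequence: starts at the zero configuration and fires a sad vertex at
each step. -/
def Valid (I : Finset (Fin n)) (l : List (Fin n)) : Prop := R.ValidFrom I 0 l

/-- The configuration reached after playing the sequence `l` from the zero configuration. -/
def play (I : Finset (Fin n)) (l : List (Fin n)) : Fin n → ℤ :=
  l.foldl (R.fire I) 0

/-- A maximal valid firing sequence: no vertex is sad in the final configuration. -/
def MaximalSeq (I : Finset (Fin n)) (l : List (Fin n)) : Prop :=
  R.Valid I l ∧ ∀ v, ¬ R.Sad I (R.play I l) v

/-- The (integer) coefficients of a vector in the basis of simple coroots, when they exist. -/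
def corootCoeffs (x : EuclideanSpace ℝ (Fin d)) : Fin n → ℤ :=
  if h : ∃ k : Fin n → ℤ, x = ∑ j, (k j : ℝ) • rsCoroot (R.α j) then h.choose else 0

/-- The `I`-height of a (co)vector: the sum over `j ∈ I` of its coefficients in the basis
of simple coroots. -/
def htI (I : Finset (Fin n)) (x : EuclideanSpace ℝ (Fin d)) : ℤ :=
  ∑ j ∈ I, R.corootCoeffs x j

end RootSystemBase

/-- The extended pairing `⟨·, α_i^∨⟩` on `E' = E ⊕ ℝ^I`, determined by
`⟨β_p, α_i^∨⟩ = −δ_{pi}`, as a linear functional. -/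
def extForm (R : RootSystemBase n d) (I : Finset (Fin n)) (i : Fin n) :
    ExtSp n d I →ₗ[ℝ] ℝ :=
  (corootForm (R.α i)).comp (LinearMap.fst ℝ _ _) -
    (if h : i ∈ I then
      (LinearMap.proj (R := ℝ) (φ := fun _ : {p : Fin n // p ∈ I} => ℝ) ⟨i, h⟩).comp
        (LinearMap.snd ℝ _ _)
    else 0)

namespace RootSystemBase

variable (R : RootSystemBase n d)

lemma extForm_apply (I : Finset (Fin n)) (i : Fin n) (x : ExtSp n d I) :
    extForm R I i x = corootForm (R.α i) x.1 - (if h : i ∈ I then x.2 ⟨i, h⟩ else 0) := by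
  by_cases h : i ∈ I <;> simp [extForm, h]

lemma extForm_alpha (I : Finset (Fin n)) (i : Fin n) :
    extForm R I i ((R.α i, 0) : ExtSp n d I) = 2 := by
  rw [R.extForm_apply]
  simp [R.corootForm_alpha_self i]

/-- The simple reflection `s_i : x ↦ x − ⟨x, α_i^∨⟩ α_i` on the extended space `E'`. -/
def extRefl (I : Finset (Fin n)) (i : Fin n) : ExtSp n d I ≃ₗ[ℝ] ExtSp n d I :=
  Module.reflection (R.extForm_alpha I i)

/-- The extended pairing `⟨x, α_i^∨⟩` for `x ∈ E'`. -/
def extPair (I : Finset (Fin n)) (x : ExtSp n d I) (i : Fin n) : ℝ := extForm R I i x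

/-- The action of `s_{i_t} ⋯ s_{i_1}` on the extended space `E'`. -/
def extSeqProd (I : Finset (Fin n)) (l : List (Fin n)) : ExtSp n d I ≃ₗ[ℝ] ExtSp n d I :=
  (l.reverse.map (R.extRefl I)).prod

end RootSystemBase

namespace RootSystemBase

variable (R : RootSystemBase n d)

lemma corootForm_apply' (γ x : EuclideanSpace ℝ (Fin d)) :
    corootForm γ x = rsPair x γ := rfl

lemma sRefl_apply (i : Fin n) (x : EuclideanSpace ℝ (Fin d)) :
    R.sRefl i x = x - rsPair x (R.α i) • R.α i :=
  Module.reflection_apply x (R.corootForm_alpha_self i)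

lemma inner_sRefl (i : Fin n) (x y : EuclideanSpace ℝ (Fin d)) :
    ⟪R.sRefl i x, R.sRefl i y⟫ = ⟪x, y⟫ := by
  have hA : ⟪R.α i, R.α i⟫ ≠ 0 := R.inner_alpha_ne_zero i
  rw [R.sRefl_apply, R.sRefl_apply, rsPair, rsPair]
  rw [inner_sub_left, inner_sub_right, inner_sub_right, real_inner_smul_left,
    real_inner_smul_left, real_inner_smul_right, real_inner_smul_right]
  rw [real_inner_comm (R.α i) y]
  set a := ⟪x, R.α i⟫ with ha
  set b := ⟪y, R.α i⟫ with hb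
  set A := ⟪R.α i, R.α i⟫ with hA'
  field_simp
  ring

lemma sRefl_mem (i : Fin n) {β : EuclideanSpace ℝ (Fin d)} (hβ : β ∈ R.Φ) :
    R.sRefl i β ∈ R.Φ := by
  rw [R.sRefl_apply]
  exact R.reflClosed β hβ (R.α i) (R.α_mem i)

lemma rsPair_self {β : EuclideanSpace ℝ (Fin d)} (hβ : β ≠ 0) : rsPair β β = 2 := by
  have : ⟪β, β⟫ ≠ 0 := fun h => hβ ((inner_self_eq_zero (𝕜 := ℝ)).mp h)
  rw [rsPair, mul_div_assoc, div_self this, mul_one]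

lemma neg_mem {β : EuclideanSpace ℝ (Fin d)} (hβ : β ∈ R.Φ) : -β ∈ R.Φ := by
  have := R.reflClosed β hβ β hβ
  rwa [rsPair_self (R.nonzero β hβ), two_smul, sub_add_eq_sub_sub, sub_sub_cancel_left] at this

lemma sRefl_alpha (i : Fin n) : R.sRefl i (R.α i) = -R.α i := by
  rw [R.sRefl_apply, rsPair_self (R.alpha_ne_zero i), two_smul, sub_add_eq_sub_sub,
    sub_sub_cancel_left]

lemma sRefl_sRefl (i : Fin n) (x : EuclideanSpace ℝ (Fin d)) :
    R.sRefl i (R.sRefl i x) = x :=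
  Module.involutive_reflection (R.corootForm_alpha_self i) x

end RootSystemBase

namespace RootSystemBase

variable (R : RootSystemBase n d)

/-- The span of the simple roots. -/
def spanA : Submodule ℝ (EuclideanSpace ℝ (Fin d)) := Submodule.span ℝ (Set.range R.α)

/-- The simple roots as a basis of their span. -/
def bA : Module.Basis (Fin n) ℝ R.spanA := Module.Basis.span R.indep

/-- Coordinates with respect to the simple roots (extended by orthogonal projection). -/
def coordsL : EuclideanSpace ℝ (Fin d) →ₗ[ℝ] (Fin n → ℝ) where
  toFun x u := R.bA.repr (R.spanA.orthogonalProjectionOnto x) u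
  map_add' x y := by funext u; simp [map_add]
  map_smul' c x := by funext u; simp [map_smul]

lemma coordsL_alpha (i : Fin n) : R.coordsL (R.α i) = fun u => if i = u then 1 else 0 := by
  funext u
  show R.bA.repr (R.spanA.orthogonalProjectionOnto (R.α i)) u = _
  have hmem : R.α i ∈ R.spanA := Submodule.subset_span ⟨i, rfl⟩
  have h1 : R.spanA.orthogonalProjectionOnto (R.α i) = R.bA i := by
    apply Subtype.ext
    show R.spanA.starProjection (R.α i) = _
    rw [Submodule.starProjection_eq_self_iff.mpr hmem]
    exact (Module.Basis.coe_span_apply R.indep i).symm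
  rw [h1, Module.Basis.repr_self]
  simp [Finsupp.single_apply]

lemma coordsL_combo (c : Fin n → ℝ) :
    R.coordsL (∑ u, c u • R.α u) = c := by
  funext v
  rw [map_sum]
  have : ∀ u, R.coordsL (c u • R.α u) = c u • R.coordsL (R.α u) := fun u => map_smul _ _ _
  simp only [this, coordsL_alpha]
  simp [Finset.sum_apply, Finset.sum_ite_eq]

lemma combo_cancel {c c' : Fin n → ℝ} (h : ∑ u, c u • R.α u = ∑ u, c' u • R.α u) : c = c' := by
  have := congrArg R.coordsL h
  rwa [R.coordsL_combo, R.coordsL_combo] at this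

/-- The real coordinates of a vector. -/
def rc (β : EuclideanSpace ℝ (Fin d)) : Fin n → ℝ := R.coordsL β

lemma rc_repr {β : EuclideanSpace ℝ (Fin d)} (hβ : β ∈ R.Φ) :
    β = ∑ u, R.rc β u • R.α u := by
  obtain ⟨c, hc, -⟩ := R.base β hβ
  have : R.rc β = fun u => (c u : ℝ) := by
    rw [rc, hc, R.coordsL_combo]
  rw [this, ← hc]

lemma rc_int {β : EuclideanSpace ℝ (Fin d)} (hβ : β ∈ R.Φ) (u : Fin n) :
    ∃ k : ℤ, R.rc β u = k := by
  obtain ⟨c, hc, -⟩ := R.base β hβ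
  have : R.rc β = fun u => (c u : ℝ) := by rw [rc, hc, R.coordsL_combo]
  exact ⟨c u, by rw [this]⟩

lemma rc_dichotomy {β : EuclideanSpace ℝ (Fin d)} (hβ : β ∈ R.Φ) :
    (∀ u, 0 ≤ R.rc β u) ∨ (∀ u, R.rc β u ≤ 0) := by
  obtain ⟨c, hc, hd⟩ := R.base β hβ
  have hrc : ∀ v, R.rc β v = (c v : ℝ) := fun v =>
    congrFun (by rw [rc, hc, R.coordsL_combo] : R.rc β = fun v => (c v : ℝ)) v
  rcases hd with h | h
  · exact Or.inl fun u => by rw [hrc u]; exact_mod_cast h u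
  · exact Or.inr fun u => by rw [hrc u]; exact_mod_cast h u

lemma posRoots_subset : R.posRoots ⊆ R.Φ := Finset.filter_subset _ _

lemma mem_posRoots_iff {β : EuclideanSpace ℝ (Fin d)} (hβ : β ∈ R.Φ) :
    β ∈ R.posRoots ↔ ∀ u, 0 ≤ R.rc β u := by
  constructor
  · rintro hp u
    obtain ⟨c, hc, hcpos⟩ := (Finset.mem_filter.mp hp).2
    have hrc : ∀ v, R.rc β v = (c v : ℝ) := fun v =>
      congrFun (by rw [rc, hc, R.coordsL_combo] : R.rc β = fun v => (c v : ℝ)) v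
    rw [hrc u]; exact_mod_cast hcpos u
  · intro h
    obtain ⟨c, hc, hd⟩ := R.base β hβ
    have hrc : ∀ v, R.rc β v = (c v : ℝ) := fun v =>
      congrFun (by rw [rc, hc, R.coordsL_combo] : R.rc β = fun v => (c v : ℝ)) v
    refine Finset.mem_filter.mpr ⟨hβ, ⟨c, hc, fun u => ?_⟩⟩
    rcases hd with h' | h'
    · exact h' u
    · have h1 : (0:ℝ) ≤ (c u : ℝ) := by rw [← hrc u]; exact h u
      exact_mod_cast h1

lemma rc_neg (β : EuclideanSpace ℝ (Fin d)) : R.rc (-β) = fun u => -R.rc β u := by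
  funext u
  show R.coordsL (-β) u = _
  rw [map_neg]; rfl

lemma pos_or_neg {β : EuclideanSpace ℝ (Fin d)} (hβ : β ∈ R.Φ) :
    β ∈ R.posRoots ∨ -β ∈ R.posRoots := by
  rcases R.rc_dichotomy hβ with h | h
  · exact Or.inl ((R.mem_posRoots_iff hβ).mpr h)
  · refine Or.inr ((R.mem_posRoots_iff (R.neg_mem hβ)).mpr ?_)
    intro u; rw [R.rc_neg]; simpa using h u

lemma not_pos_and_neg {β : EuclideanSpace ℝ (Fin d)} (h1 : β ∈ R.posRoots)
    (h2 : -β ∈ R.posRoots) : False := by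
  have hβ : β ∈ R.Φ := R.posRoots_subset h1
  have ha := (R.mem_posRoots_iff hβ).mp h1
  have hb := (R.mem_posRoots_iff (R.neg_mem hβ)).mp h2
  have hz : R.rc β = fun _ => 0 := by
    funext u
    have h3 := hb u
    rw [congrFun (R.rc_neg β) u] at h3
    have h4 := ha u
    show R.rc β u = 0
    linarith
  have := R.rc_repr hβ
  rw [hz] at this
  simp at this
  exact R.nonzero β hβ this

lemma neg_of_not_pos {β : EuclideanSpace ℝ (Fin d)} (hβ : β ∈ R.Φ) (h : β ∉ R.posRoots) :
    -β ∈ R.posRoots := (R.pos_or_neg hβ).resolve_left h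

lemma alpha_mem_posRoots (i : Fin n) : R.α i ∈ R.posRoots := by
  refine (R.mem_posRoots_iff (R.α_mem i)).mpr fun u => ?_
  show 0 ≤ R.coordsL (R.α i) u
  rw [congrFun (R.coordsL_alpha i) u]
  split <;> norm_num

end RootSystemBase

namespace RootSystemBase

variable (R : RootSystemBase n d)

lemma rc_sRefl_ne (i : Fin n) (β : EuclideanSpace ℝ (Fin d)) {u : Fin n} (hu : u ≠ i) :
    R.rc (R.sRefl i β) u = R.rc β u := by
  rw [R.sRefl_apply]
  show R.coordsL (β - rsPair β (R.α i) • R.α i) u = _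
  rw [map_sub, map_smul]
  have h := congrFun (R.coordsL_alpha i) u
  show R.coordsL β u - rsPair β (R.α i) * R.coordsL (R.α i) u = _
  rw [h, if_neg (fun he => hu he.symm)]
  simp [rc]

/-- A positive root other than `α i` stays positive under `s i`. -/
lemma sRefl_pos (i : Fin n) {β : EuclideanSpace ℝ (Fin d)}
    (hβ : β ∈ R.posRoots) (hne : β ≠ R.α i) :
    R.sRefl i β ∈ R.posRoots ∧ R.sRefl i β ≠ R.α i := by
  have hβΦ : β ∈ R.Φ := R.posRoots_subset hβ
  have hmem : R.sRefl i β ∈ R.Φ := R.sRefl_mem i hβΦ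
  have hpos := (R.mem_posRoots_iff hβΦ).mp hβ
  -- find u ≠ i with rc β u > 0
  have hex : ∃ u, u ≠ i ∧ 0 < R.rc β u := by
    by_contra hcon
    push_neg at hcon
    have hz : ∀ u, u ≠ i → R.rc β u = 0 := fun u hu => le_antisymm (hcon u hu) (hpos u)
    have hβeq : β = R.rc β i • R.α i := by
      conv_lhs => rw [R.rc_repr hβΦ]
      exact Finset.sum_eq_single i (fun u _ hu => by rw [hz u hu, zero_smul])
        (fun h => absurd (Finset.mem_univ i) h)
    have ht : R.rc β i = 1 ∨ R.rc β i = -1 := by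
      refine R.reduced (R.α i) (R.α_mem i) (R.rc β i) ?_
      rw [← hβeq]; exact hβΦ
    rcases ht with h1 | h1
    · rw [h1, one_smul] at hβeq; exact hne hβeq
    · have := hpos i; rw [h1] at this; norm_num at this
  obtain ⟨u, hui, hu⟩ := hex
  have h2 : 0 < R.rc (R.sRefl i β) u := by rw [R.rc_sRefl_ne i β hui]; exact hu
  have hp : R.sRefl i β ∈ R.posRoots := by
    rcases R.pos_or_neg hmem with h | h
    · exact h
    · exfalso
      have := (R.mem_posRoots_iff (R.neg_mem hmem)).mp h u
      rw [congrFun (R.rc_neg _) u] at this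
      linarith
  refine ⟨hp, fun he => ?_⟩
  have : β = -R.α i := by
    have := congrArg (R.sRefl i) he
    rw [R.sRefl_sRefl, R.sRefl_alpha] at this
    exact this
  rw [this] at hβ
  exact R.not_pos_and_neg (R.alpha_mem_posRoots i) hβ

lemma cartan_cast (u v : Fin n) : (R.cartan u v : ℝ) = rsPair (R.α u) (R.α v) := by
  obtain ⟨k, hk⟩ := R.crystallographic (R.α u) (R.α_mem u) (R.α v) (R.α_mem v)
  rw [cartan, hk]
  norm_num

/-! ### Words -/

lemma wordProd_nil : R.wordProd [] = 1 := rfl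

lemma wordProd_cons (i : Fin n) (l : List (Fin n)) :
    R.wordProd (i :: l) = R.sRefl i * R.wordProd l := by
  simp [wordProd]

lemma wordProd_append (l l' : List (Fin n)) :
    R.wordProd (l ++ l') = R.wordProd l * R.wordProd l' := by
  simp [wordProd]

lemma wordProd_apply_cons (i : Fin n) (l : List (Fin n)) (x : EuclideanSpace ℝ (Fin d)) :
    R.wordProd (i :: l) x = R.sRefl i (R.wordProd l x) := by
  rw [R.wordProd_cons]; rfl

/-- `w` is expressible as a word in the simple reflections. -/
def IsW (w : EuclideanSpace ℝ (Fin d) ≃ₗ[ℝ] EuclideanSpace ℝ (Fin d)) : Prop :=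
  ∃ l : List (Fin n), R.wordProd l = w

lemma isW_one : R.IsW 1 := ⟨[], rfl⟩

lemma isW_sRefl (i : Fin n) : R.IsW (R.sRefl i) := ⟨[i], by simp [wordProd]⟩

lemma isW_wordProd (l : List (Fin n)) : R.IsW (R.wordProd l) := ⟨l, rfl⟩

variable {R}

lemma IsW.mul {w w'} (h : R.IsW w) (h' : R.IsW w') : R.IsW (w * w') := by
  obtain ⟨l, hl⟩ := h; obtain ⟨l', hl'⟩ := h'
  exact ⟨l ++ l', by rw [R.wordProd_append, hl, hl']⟩

lemma sRefl_mul_self (i : Fin n) : R.sRefl i * R.sRefl i = 1 :=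
  LinearEquiv.toLinearMap_injective (LinearMap.ext fun x => R.sRefl_sRefl i x)

lemma sRefl_inv (i : Fin n) : (R.sRefl i)⁻¹ = R.sRefl i :=
  inv_eq_of_mul_eq_one_right (R.sRefl_mul_self i)

variable (R)

lemma sRefl_mul_self' : True := trivial

lemma wordProd_reverse (l : List (Fin n)) :
    R.wordProd l.reverse = (R.wordProd l)⁻¹ := by
  induction l with
  | nil => simp [wordProd]
  | cons i t ih =>
    have hs : R.wordProd [i] = R.sRefl i := by simp [wordProd]
    rw [List.reverse_cons, R.wordProd_append, ih, hs, R.wordProd_cons, mul_inv_rev,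
      R.sRefl_inv]

variable {R}

lemma IsW.inv {w} (h : R.IsW w) : R.IsW w⁻¹ := by
  obtain ⟨l, hl⟩ := h
  exact ⟨l.reverse, by rw [R.wordProd_reverse, hl]⟩

lemma IsW.inner {w} (h : R.IsW w) (x y : EuclideanSpace ℝ (Fin d)) :
    ⟪w x, w y⟫ = ⟪x, y⟫ := by
  obtain ⟨l, hl⟩ := h
  subst hl
  induction l with
  | nil => rfl
  | cons i t ih =>
    rw [R.wordProd_apply_cons, R.wordProd_apply_cons, R.inner_sRefl]
    exact ih

lemma IsW.root_mem {w} (h : R.IsW w) {β} (hβ : β ∈ R.Φ) : w β ∈ R.Φ := by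
  obtain ⟨l, hl⟩ := h
  subst hl
  induction l with
  | nil => exact hβ
  | cons i t ih => rw [R.wordProd_apply_cons]; exact R.sRefl_mem i ih

lemma IsW.rsPair_map {w} (h : R.IsW w) (x y : EuclideanSpace ℝ (Fin d)) :
    rsPair (w x) (w y) = rsPair x y := by
  rw [rsPair, rsPair, h.inner, h.inner]

lemma IsW.inv_apply {w : EuclideanSpace ℝ (Fin d) ≃ₗ[ℝ] EuclideanSpace ℝ (Fin d)}
    (x : EuclideanSpace ℝ (Fin d)) : w⁻¹ (w x) = x := by
  show ((w⁻¹ : _ ≃ₗ[ℝ] _) * w) x = x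
  rw [inv_mul_cancel]; rfl

lemma IsW.apply_inv {w : EuclideanSpace ℝ (Fin d) ≃ₗ[ℝ] EuclideanSpace ℝ (Fin d)}
    (x : EuclideanSpace ℝ (Fin d)) : w (w⁻¹ x) = x := by
  show (w * w⁻¹) x = x
  rw [mul_inv_cancel]; rfl

end RootSystemBase

namespace RootSystemBase

variable (R : RootSystemBase n d)

/-- The inversion set `N(w) = {γ ∈ Φ⁺ : wγ ∈ Φ⁻}`. -/
def invS (w : EuclideanSpace ℝ (Fin d) ≃ₗ[ℝ] EuclideanSpace ℝ (Fin d)) :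
    Finset (EuclideanSpace ℝ (Fin d)) :=
  R.posRoots.filter fun γ => -(w γ) ∈ R.posRoots

lemma mem_invS {w} {γ} : γ ∈ R.invS w ↔ γ ∈ R.posRoots ∧ -(w γ) ∈ R.posRoots :=
  Finset.mem_filter

lemma invS_one : R.invS 1 = ∅ := by
  rw [Finset.eq_empty_iff_forall_notMem]
  intro γ hγ
  rw [mem_invS] at hγ
  exact R.not_pos_and_neg hγ.1 hγ.2

lemma invS_subset_pos (w) : R.invS w ⊆ R.posRoots := Finset.filter_subset _ _

lemma pos_of_not_inv {w} (hw : R.IsW w) {γ} (hγ : γ ∈ R.posRoots) (h : γ ∉ R.invS w) :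
    w γ ∈ R.posRoots := by
  have : w γ ∈ R.Φ := hw.root_mem (R.posRoots_subset hγ)
  rcases R.pos_or_neg this with h' | h'
  · exact h'
  · exact absurd (R.mem_invS.mpr ⟨hγ, h'⟩) h

lemma mul_apply (w w' : EuclideanSpace ℝ (Fin d) ≃ₗ[ℝ] EuclideanSpace ℝ (Fin d))
    (x : EuclideanSpace ℝ (Fin d)) : (w * w') x = w (w' x) := rfl

lemma neg_alpha_not_pos (i : Fin n) : -R.α i ∉ R.posRoots := fun h =>
  R.not_pos_and_neg (R.alpha_mem_posRoots i) h

/-- Sign of `s_i δ` for a root `δ`. -/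
lemma sRefl_neg_iff (i : Fin n) {δ} (hδ : δ ∈ R.Φ) :
    -(R.sRefl i δ) ∈ R.posRoots ↔ ((-δ ∈ R.posRoots ∧ δ ≠ -R.α i) ∨ δ = R.α i) := by
  by_cases hp : δ ∈ R.posRoots
  · by_cases he : δ = R.α i
    · subst he
      rw [R.sRefl_alpha, neg_neg]
      simp [R.alpha_mem_posRoots i]
    · have h1 := (R.sRefl_pos i hp he).1
      constructor
      · intro h; exact absurd h (fun h' => R.not_pos_and_neg h1 h')
      · rintro (⟨h2, -⟩ | h2)
        · exact absurd h2 (fun h' => R.not_pos_and_neg hp h')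
        · exact absurd h2 he
  · have hn : -δ ∈ R.posRoots := R.neg_of_not_pos hδ hp
    by_cases he : -δ = R.α i
    · have hδe : δ = -R.α i := by rw [← he, neg_neg]
      constructor
      · intro h
        exfalso
        rw [hδe, map_neg, R.sRefl_alpha, neg_neg] at h
        exact R.neg_alpha_not_pos i h
      · rintro (⟨-, h2⟩ | h2)
        · exact absurd hδe h2
        · exfalso; rw [h2] at hp; exact hp (R.alpha_mem_posRoots i)
    · have h1 := R.sRefl_pos i hn he
      have : -(R.sRefl i δ) = R.sRefl i (-δ) := (map_neg _ _).symm
      rw [this]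
      constructor
      · intro _
        left
        refine ⟨hn, fun h2 => he ?_⟩
        rw [h2, neg_neg]
      · intro _; exact h1.1

lemma invS_left_pos {w} (hw : R.IsW w) (i : Fin n) (h : w⁻¹ (R.α i) ∈ R.posRoots) :
    R.invS (R.sRefl i * w) = insert (w⁻¹ (R.α i)) (R.invS w) ∧
      w⁻¹ (R.α i) ∉ R.invS w := by
  set γ₀ := w⁻¹ (R.α i) with hγ₀
  have hwγ₀ : w γ₀ = R.α i := IsW.apply_inv _
  have hγ₀n : γ₀ ∉ R.invS w := by
    rw [R.mem_invS, hwγ₀]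
    rintro ⟨-, hn⟩
    exact R.neg_alpha_not_pos i hn
  refine ⟨Finset.ext fun γ => ?_, hγ₀n⟩
  rw [Finset.mem_insert, R.mem_invS, R.mem_invS]
  constructor
  · rintro ⟨hγp, hneg⟩
    rw [mul_apply, R.sRefl_neg_iff i (hw.root_mem (R.posRoots_subset hγp))] at hneg
    rcases hneg with ⟨h1, -⟩ | h1
    · exact Or.inr ⟨hγp, h1⟩
    · left
      exact w.injective (by rw [hwγ₀, h1])
  · rintro (rfl | ⟨hγp, hneg⟩)
    · refine ⟨h, ?_⟩
      rw [mul_apply, R.sRefl_neg_iff i (hw.root_mem (R.posRoots_subset h))]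
      exact Or.inr hwγ₀
    · refine ⟨hγp, ?_⟩
      rw [mul_apply, R.sRefl_neg_iff i (hw.root_mem (R.posRoots_subset hγp))]
      left
      refine ⟨hneg, fun h2 => ?_⟩
      have : γ = -γ₀ := by
        apply w.injective
        rw [h2, map_neg, hwγ₀]
      rw [this] at hγp
      exact R.not_pos_and_neg h hγp

lemma invS_left_neg {w} (hw : R.IsW w) (i : Fin n) (h : -(w⁻¹ (R.α i)) ∈ R.posRoots) :
    R.invS (R.sRefl i * w) = (R.invS w).erase (-(w⁻¹ (R.α i))) ∧
      -(w⁻¹ (R.α i)) ∈ R.invS w := by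
  set γ₁ := -(w⁻¹ (R.α i)) with hγ₁
  have hwγ₁ : w γ₁ = -R.α i := by rw [hγ₁, map_neg, IsW.apply_inv]
  have hγ₁m : γ₁ ∈ R.invS w := by
    rw [R.mem_invS, hwγ₁, neg_neg]
    exact ⟨h, R.alpha_mem_posRoots i⟩
  refine ⟨Finset.ext fun γ => ?_, hγ₁m⟩
  rw [Finset.mem_erase, R.mem_invS, R.mem_invS]
  constructor
  · rintro ⟨hγp, hneg⟩
    rw [mul_apply, R.sRefl_neg_iff i (hw.root_mem (R.posRoots_subset hγp))] at hneg
    rcases hneg with ⟨h1, h2⟩ | h1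
    · refine ⟨fun he => h2 ?_, hγp, h1⟩
      rw [he, hwγ₁]
    · exfalso
      have : γ = -γ₁ := by
        apply w.injective
        rw [h1, map_neg, hwγ₁, neg_neg]
      rw [this] at hγp
      exact R.not_pos_and_neg h hγp
  · rintro ⟨hne, hγp, hneg⟩
    refine ⟨hγp, ?_⟩
    rw [mul_apply, R.sRefl_neg_iff i (hw.root_mem (R.posRoots_subset hγp))]
    left
    refine ⟨hneg, fun h2 => hne ?_⟩
    apply w.injective
    rw [h2, hwγ₁]

lemma card_invS_left {w} (hw : R.IsW w) (i : Fin n) :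
    (R.invS (R.sRefl i * w)).card = (R.invS w).card + 1 ∨
    (R.invS (R.sRefl i * w)).card + 1 = (R.invS w).card := by
  have hΦ : w⁻¹ (R.α i) ∈ R.Φ := hw.inv.root_mem (R.α_mem i)
  rcases R.pos_or_neg hΦ with h | h
  · obtain ⟨he, hn⟩ := R.invS_left_pos hw i h
    left
    rw [he, Finset.card_insert_of_notMem hn]
  · obtain ⟨he, hm⟩ := R.invS_left_neg hw i h
    right
    rw [he, Finset.card_erase_of_mem hm]
    have : 1 ≤ (R.invS w).card := Finset.card_pos.mpr ⟨_, hm⟩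
    omega

lemma card_invS_le (l : List (Fin n)) : (R.invS (R.wordProd l)).card ≤ l.length := by
  induction l with
  | nil => rw [R.wordProd_nil, R.invS_one]; simp
  | cons i t ih =>
    rw [R.wordProd_cons]
    rcases R.card_invS_left (R.isW_wordProd t) i with h | h <;>
      simp only [List.length_cons] <;> omega

lemma card_invS_inv {w} (hw : R.IsW w) : (R.invS w⁻¹).card = (R.invS w).card := by
  apply Finset.card_bij (fun γ _ => -(w⁻¹ γ))
  · intro γ hγ
    rw [R.mem_invS] at hγ ⊢
    refine ⟨hγ.2, ?_⟩
    rw [map_neg, IsW.apply_inv, neg_neg]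
    exact hγ.1
  · intro γ hγ γ' hγ' he
    have := congrArg (fun x => w (-x)) he
    simpa [map_neg, IsW.apply_inv, neg_neg] using this
  · intro δ hδ
    rw [R.mem_invS] at hδ
    refine ⟨-(w δ), ?_, ?_⟩
    · rw [R.mem_invS, map_neg, IsW.inv_apply, neg_neg]
      exact ⟨hδ.2, hδ.1⟩
    · rw [map_neg, IsW.inv_apply, neg_neg]

end RootSystemBase

namespace RootSystemBase

variable (R : RootSystemBase n d)

lemma card_invS_right_pos {w} (hw : R.IsW w) (u : Fin n) (h : w (R.α u) ∈ R.posRoots) :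
    (R.invS (w * R.sRefl u)).card = (R.invS w).card + 1 := by
  have h1 : (w * R.sRefl u)⁻¹ = R.sRefl u * w⁻¹ := by
    rw [mul_inv_rev, R.sRefl_inv]
  have h2 : (w⁻¹)⁻¹ (R.α u) = w (R.α u) := by
    rw [inv_inv]
  have hlp := R.invS_left_pos hw.inv u (by rw [h2]; exact h)
  calc (R.invS (w * R.sRefl u)).card
      = (R.invS ((w * R.sRefl u)⁻¹)).card :=
        (R.card_invS_inv (hw.mul (R.isW_sRefl u))).symm
    _ = (R.invS (R.sRefl u * w⁻¹)).card := by rw [h1]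
    _ = (R.invS w⁻¹).card + 1 := by
        rw [hlp.1, Finset.card_insert_of_notMem hlp.2]
    _ = (R.invS w).card + 1 := by rw [R.card_invS_inv hw]

lemma card_invS_right_neg {w} (hw : R.IsW w) (u : Fin n) (h : -(w (R.α u)) ∈ R.posRoots) :
    (R.invS (w * R.sRefl u)).card + 1 = (R.invS w).card := by
  have h1 : (w * R.sRefl u)⁻¹ = R.sRefl u * w⁻¹ := by
    rw [mul_inv_rev, R.sRefl_inv]
  have h2 : (w⁻¹)⁻¹ (R.α u) = w (R.α u) := by rw [inv_inv]
  have hlp := R.invS_left_neg hw.inv u (by rw [h2]; exact h)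
  have hc : 1 ≤ (R.invS w⁻¹).card := Finset.card_pos.mpr ⟨_, hlp.2⟩
  have : (R.invS (w * R.sRefl u)).card = (R.invS w⁻¹).card - 1 := by
    calc (R.invS (w * R.sRefl u)).card
        = (R.invS ((w * R.sRefl u)⁻¹)).card :=
          (R.card_invS_inv (hw.mul (R.isW_sRefl u))).symm
      _ = (R.invS (R.sRefl u * w⁻¹)).card := by rw [h1]
      _ = (R.invS w⁻¹).card - 1 := by rw [hlp.1, Finset.card_erase_of_mem hlp.2]
  rw [this, ← R.card_invS_inv hw]
  omega

/-- The exchange condition. -/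
lemma exchange (l : List (Fin n)) (u : Fin n)
    (h : -(R.wordProd l (R.α u)) ∈ R.posRoots) :
    ∃ l' : List (Fin n), l'.length + 1 = l.length ∧
      R.wordProd l' = R.wordProd l * R.sRefl u := by
  induction l with
  | nil =>
    exfalso
    rw [R.wordProd_nil] at h
    exact R.neg_alpha_not_pos u (by simpa using h)
  | cons i t ih =>
    have ht : R.wordProd t (R.α u) ∈ R.Φ :=
      (R.isW_wordProd t).root_mem (R.α_mem u)
    rcases R.pos_or_neg ht with hp | hn
    · -- wordProd t (α u) is positive; since s_i of it is negative, it must equal α i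
      have hneg : -(R.sRefl i (R.wordProd t (R.α u))) ∈ R.posRoots := by
        rw [← R.wordProd_apply_cons]; exact h
      rw [R.sRefl_neg_iff i ht] at hneg
      have heq : R.wordProd t (R.α u) = R.α i := by
        rcases hneg with ⟨h1, -⟩ | h1
        · exact absurd h1 (fun h' => R.not_pos_and_neg hp h')
        · exact h1
      -- then s_i ∘ wordProd t = wordProd t ∘ s_u
      have hconj : R.sRefl i * R.wordProd t = R.wordProd t * R.sRefl u := by
        apply LinearEquiv.toLinearMap_injective
        apply LinearMap.ext
        intro x
        show R.sRefl i (R.wordProd t x) = R.wordProd t (R.sRefl u x)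
        rw [R.sRefl_apply, R.sRefl_apply, map_sub, map_smul, heq]
        congr 2
        have := (R.isW_wordProd t).rsPair_map x (R.α u)
        rw [heq] at this
        exact this
      refine ⟨t, by simp, ?_⟩
      rw [R.wordProd_cons, hconj, mul_assoc, R.sRefl_mul_self, mul_one]
    · obtain ⟨t', ht1, ht2⟩ := ih hn
      refine ⟨i :: t', by simp [← ht1], ?_⟩
      rw [R.wordProd_cons, ht2, R.wordProd_cons, mul_assoc]

lemma len_le {w} (l : List (Fin n)) (hl : R.wordProd l = w) : R.len w ≤ l.length :=
  Nat.sInf_le ⟨l, rfl, hl⟩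

lemma len_spec {w} (hw : R.IsW w) :
    ∃ l : List (Fin n), l.length = R.len w ∧ R.wordProd l = w := by
  obtain ⟨l, hl⟩ := hw
  have hne : {t | ∃ l' : List (Fin n), l'.length = t ∧ R.wordProd l' = w}.Nonempty :=
    ⟨l.length, l, rfl, hl⟩
  exact Nat.sInf_mem hne

lemma exists_neg_simple {w} (hw : R.IsW w) (hne : R.len w ≠ 0) :
    ∃ u, -(w (R.α u)) ∈ R.posRoots := by
  obtain ⟨l, hlen, hl⟩ := R.len_spec hw
  rcases List.eq_nil_or_concat l with rfl | ⟨t, u, rfl⟩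
  · simp at hlen; omega
  · rw [List.concat_eq_append] at hlen hl
    rcases R.pos_or_neg ((R.isW_wordProd t).root_mem (R.α_mem u)) with hp | hn
    · refine ⟨u, ?_⟩
      have : R.wordProd (t ++ [u]) (R.α u) = -(R.wordProd t (R.α u)) := by
        rw [R.wordProd_append]
        show R.wordProd t (R.wordProd [u] (R.α u)) = _
        have : R.wordProd [u] = R.sRefl u := by simp [wordProd]
        rw [this, R.sRefl_alpha, map_neg]
      rw [hl] at this
      rw [this, neg_neg]
      exact hp
    · exfalso
      obtain ⟨t', ht1, ht2⟩ := R.exchange t u hn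
      have hw' : R.wordProd t' = w := by
        rw [ht2, ← hl, R.wordProd_append]
        have huu : R.wordProd [u] = R.sRefl u := by simp [wordProd]
        rw [huu]
      have h2 := R.len_le t' hw'
      have hlen' : t.length + 1 = R.len w := by simpa using hlen
      omega

end RootSystemBase

namespace RootSystemBase

variable (R : RootSystemBase n d)

lemma len_le_card {w} (hw : R.IsW w) : R.len w ≤ (R.invS w).card := by
  generalize hk : R.len w = k
  induction k using Nat.strong_induction_on generalizing w with
  | _ k ih =>
    rcases Nat.eq_zero_or_pos k with rfl | hpos
    · omega
    · obtain ⟨u, hu⟩ := R.exists_neg_simple hw (by omega)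
      obtain ⟨l, hlen, hl⟩ := R.len_spec hw
      obtain ⟨l', hl1, hl2⟩ := R.exchange l u (by rw [hl]; exact hu)
      set w' := w * R.sRefl u with hw'
      have hw'w : R.wordProd l' = w' := by rw [hl2, hl]
      have hlw' : R.len w' ≤ k - 1 := by
        have := R.len_le l' hw'w
        omega
      have hcard : (R.invS w').card + 1 = (R.invS w).card := R.card_invS_right_neg hw u hu
      have hIsW' : R.IsW w' := hw.mul (R.isW_sRefl u)
      have hih := ih (R.len w') (by omega) hIsW' rfl
      -- len w ≤ len w' + 1
      obtain ⟨m, hm1, hm2⟩ := R.len_spec hIsW'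
      have hback : R.wordProd (m ++ [u]) = w := by
        rw [R.wordProd_append, hm2]
        have : R.wordProd [u] = R.sRefl u := by simp [wordProd]
        rw [this, hw', mul_assoc, R.sRefl_mul_self, mul_one]
      have := R.len_le (m ++ [u]) hback
      simp only [List.length_append, List.length_singleton] at this
      omega

lemma len_eq_card {w} (hw : R.IsW w) : R.len w = (R.invS w).card := by
  refine le_antisymm (R.len_le_card hw) ?_
  obtain ⟨l, hlen, hl⟩ := R.len_spec hw
  have := R.card_invS_le l
  rw [hl] at this
  omega

lemma eq_one_of_invS_empty {w} (hw : R.IsW w) (h : R.invS w = ∅) : w = 1 := by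
  have hlen : R.len w = 0 := by rw [R.len_eq_card hw, h]; rfl
  obtain ⟨l, hl1, hl2⟩ := R.len_spec hw
  rw [hlen] at hl1
  rw [List.length_eq_zero_iff] at hl1
  subst hl1
  rw [← hl2, R.wordProd_nil]

lemma eq_of_invS_eq {w w'} (hw : R.IsW w) (hw' : R.IsW w') (h : R.invS w = R.invS w') :
    w = w' := by
  have hu : R.IsW (w' * w⁻¹) := hw'.mul hw.inv
  have hempty : R.invS (w' * w⁻¹) = ∅ := by
    rw [Finset.eq_empty_iff_forall_notMem]
    intro δ hδ
    rw [R.mem_invS] at hδ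
    obtain ⟨hδp, hδn⟩ := hδ
    have hδΦ : δ ∈ R.Φ := R.posRoots_subset hδp
    have hγΦ : w⁻¹ δ ∈ R.Φ := hw.inv.root_mem hδΦ
    have hkey : (w' * w⁻¹) δ = w' (w⁻¹ δ) := rfl
    rcases R.pos_or_neg hγΦ with hγp | hγn
    · -- γ pos: γ ∉ invS w but γ ∈ invS w'
      have h1 : w⁻¹ δ ∉ R.invS w := by
        rw [R.mem_invS]
        rintro ⟨-, hneg⟩
        rw [IsW.apply_inv] at hneg
        exact R.not_pos_and_neg hδp hneg
      have h2 : w⁻¹ δ ∈ R.invS w' := by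
        rw [R.mem_invS]
        exact ⟨hγp, by rw [← hkey]; exact hδn⟩
      rw [h] at h1
      exact h1 h2
    · -- -γ pos: -γ ∈ invS w but ∉ invS w'
      have h1 : -(w⁻¹ δ) ∈ R.invS w := by
        rw [R.mem_invS]
        refine ⟨hγn, ?_⟩
        rw [map_neg, IsW.apply_inv, neg_neg]
        exact hδp
      have h2 : -(w⁻¹ δ) ∉ R.invS w' := by
        rw [R.mem_invS]
        rintro ⟨-, hneg⟩
        rw [map_neg, neg_neg, ← hkey] at hneg
        have : (w' * w⁻¹) δ ∈ R.Φ := hu.root_mem hδΦ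
        exact R.not_pos_and_neg hneg hδn
      rw [h] at h1
      exact h2 h1
  have := R.eq_one_of_invS_empty hu hempty
  have h3 := congrArg (fun x => x * w) this
  simp only [one_mul, mul_assoc, inv_mul_cancel, mul_one] at h3
  exact h3.symm

end RootSystemBase

namespace RootSystemBase

variable (R : RootSystemBase n d)

lemma exists_omega' (I : Finset (Fin n)) :
    ∃ ω : EuclideanSpace ℝ (Fin d),
      ∀ v, ⟪ω, R.α v⟫ = (if v ∈ I then 1 else 0) * (⟪R.α v, R.α v⟫ / 2) := by
  classical
  let T : R.spanA →ₗ[ℝ] (Fin n → ℝ) :=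
    { toFun := fun x v => ⟪(x : EuclideanSpace ℝ (Fin d)), R.α v⟫
      map_add' := fun x y => funext fun v => by
        show ⟪(x : EuclideanSpace ℝ (Fin d)) + y, R.α v⟫ = _
        rw [inner_add_left]; rfl
      map_smul' := fun c x => funext fun v => by
        show ⟪c • (x : EuclideanSpace ℝ (Fin d)), R.α v⟫ = _
        rw [real_inner_smul_left]; rfl }
  have hinj : Function.Injective T := by
    rw [← LinearMap.ker_eq_bot, LinearMap.ker_eq_bot']
    intro x hx
    have hx' : ∀ v, ⟪(x : EuclideanSpace ℝ (Fin d)), R.α v⟫ = 0 := fun v => congrFun hx v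
    have hmem : (x : EuclideanSpace ℝ (Fin d)) ∈ Submodule.span ℝ (Set.range R.α) := x.2
    rw [Submodule.mem_span_range_iff_exists_fun] at hmem
    obtain ⟨c, hc⟩ := hmem
    have hzero : ⟪(x : EuclideanSpace ℝ (Fin d)), (x : EuclideanSpace ℝ (Fin d))⟫ = 0 := by
      nth_rewrite 1 [← hc]
      rw [sum_inner]
      apply Finset.sum_eq_zero
      intro v _
      rw [real_inner_smul_left, real_inner_comm, hx' v, mul_zero]
    have : (x : EuclideanSpace ℝ (Fin d)) = 0 := by
      rwa [inner_self_eq_zero (𝕜 := ℝ)] at hzero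
    exact Subtype.ext this
  have hrank : Module.finrank ℝ R.spanA = Module.finrank ℝ (Fin n → ℝ) := by
    rw [Module.finrank_eq_card_basis R.bA]
    simp
  have hsurj : Function.Surjective T :=
    (LinearMap.injective_iff_surjective_of_finrank_eq_finrank hrank).mp hinj
  obtain ⟨x, hx⟩ := hsurj (fun v => (if v ∈ I then 1 else 0) * (⟪R.α v, R.α v⟫ / 2))
  exact ⟨x, fun v => congrFun hx v⟩

/-- A vector `ω` with `⟨ω, α_v^∨⟩ = [v ∈ I]`. -/
def omI (I : Finset (Fin n)) : EuclideanSpace ℝ (Fin d) := (R.exists_omega' I).choose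

lemma inner_omI (I : Finset (Fin n)) (v : Fin n) :
    ⟪R.omI I, R.α v⟫ = (if v ∈ I then 1 else 0) * (⟪R.α v, R.α v⟫ / 2) :=
  (R.exists_omega' I).choose_spec v

lemma rsPair_omI (I : Finset (Fin n)) (v : Fin n) :
    rsPair (R.omI I) (R.α v) = (if v ∈ I then 1 else 0) := by
  have h2 := R.inner_alpha_ne_zero v
  rw [rsPair, R.inner_omI]
  by_cases hv : v ∈ I
  · simp only [if_pos hv, one_mul]
    field_simp
  · simp only [if_neg hv, zero_mul, mul_zero, zero_div]

lemma inner_self_alpha_pos (v : Fin n) : 0 < ⟪R.α v, R.α v⟫ :=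
  lt_of_le_of_ne real_inner_self_nonneg (fun h => R.inner_alpha_ne_zero v h.symm)

/-- Membership in the span of the `α_j`, `j ∈ P'`, in terms of coordinates. -/
lemma mem_span_sub_iff {β : EuclideanSpace ℝ (Fin d)} (hβ : β ∈ R.Φ) (P' : Finset (Fin n)) :
    β ∈ Submodule.span ℝ (R.α '' (P' : Set (Fin n))) ↔ ∀ u, u ∉ P' → R.rc β u = 0 := by
  constructor
  · intro h
    have himg : R.α '' (P' : Set (Fin n)) = ↑(P'.image R.α) := by
      rw [Finset.coe_image]
    rw [himg, Submodule.mem_span_finset] at h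
    obtain ⟨f, -, hf⟩ := h
    have hinjα : Function.Injective R.α := R.indep.injective
    have hsum : β = ∑ u ∈ P', f (R.α u) • R.α u := by
      rw [← hf, Finset.sum_image (fun x _ y _ h => hinjα h)]
    set c : Fin n → ℝ := fun u => if u ∈ P' then f (R.α u) else 0 with hc
    have hsum2 : β = ∑ u, c u • R.α u := by
      have h1 : ∑ u ∈ P', c u • R.α u = ∑ u, c u • R.α u :=
        Finset.sum_subset (Finset.subset_univ P') (fun u _ hu => by simp [hc, hu])
      rw [← h1, hsum]
      exact Finset.sum_congr rfl fun u hu => by simp [hc, hu]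
    have hrcc : R.rc β = c := by rw [rc, hsum2, R.coordsL_combo]
    intro u hu
    rw [congrFun hrcc u]
    simp [hc, hu]
  · intro h
    have hr := R.rc_repr hβ
    have hsum : ∑ u ∈ P', R.rc β u • R.α u = β := by
      rw [Finset.sum_subset (Finset.subset_univ P')
        (fun u _ hu => by rw [h u hu, zero_smul])]
      exact hr.symm
    rw [← hsum]
    exact Submodule.sum_mem _ fun u hu =>
      Submodule.smul_mem _ _ (Submodule.subset_span ⟨u, hu, rfl⟩)

lemma inner_omI_root (I : Finset (Fin n)) {δ} (hδ : δ ∈ R.Φ) :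
    ⟪R.omI I, δ⟫ = ∑ u, R.rc δ u * ((if u ∈ I then 1 else 0) * (⟪R.α u, R.α u⟫ / 2)) := by
  conv_lhs => rw [R.rc_repr hδ]
  rw [inner_sum]
  apply Finset.sum_congr rfl
  intro u _
  rw [real_inner_smul_right, R.inner_omI]

/-- The key sign computation: `⟨ω_I, δ⟩ > 0` iff `δ ∈ Φ⁺ \ Φ_J⁺`. -/
lemma mem_P_iff (I : Finset (Fin n)) {δ} (hδ : δ ∈ R.Φ) :
    δ ∈ R.posRoots \ R.parPos Iᶜ ↔ 0 < ⟪R.omI I, δ⟫ := by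
  rw [Finset.mem_sdiff]
  constructor
  · rintro ⟨hp, hnp⟩
    have hrc := (R.mem_posRoots_iff hδ).mp hp
    have hspan : ¬(δ ∈ Submodule.span ℝ (R.α '' ((Iᶜ : Finset (Fin n)) : Set (Fin n)))) := by
      intro hs
      exact hnp (Finset.mem_filter.mpr ⟨hp, hs⟩)
    rw [R.mem_span_sub_iff hδ] at hspan
    push_neg at hspan
    obtain ⟨u, hu1, hu2⟩ := hspan
    have huI : u ∈ I := by simpa using hu1
    rw [R.inner_omI_root I hδ]
    apply Finset.sum_pos'
    · intro v _
      have := hrc v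
      have h2 := (R.inner_self_alpha_pos v).le
      positivity
    · refine ⟨u, Finset.mem_univ u, ?_⟩
      have h1 : 0 < R.rc δ u := lt_of_le_of_ne (hrc u) (Ne.symm hu2)
      have h2 := R.inner_self_alpha_pos u
      rw [if_pos huI]
      positivity
  · intro hpos
    by_contra hcon
    rw [not_and_or] at hcon
    rcases hcon with hnp | hnp
    · -- δ not positive, so -δ positive, rc δ ≤ 0, inner ≤ 0
      have hneg : -δ ∈ R.posRoots := R.neg_of_not_pos hδ hnp
      have hrc : ∀ u, R.rc δ u ≤ 0 := by
        intro u
        have := (R.mem_posRoots_iff (R.neg_mem hδ)).mp hneg u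
        rw [congrFun (R.rc_neg δ) u] at this
        linarith
      have : ⟪R.omI I, δ⟫ ≤ 0 := by
        rw [R.inner_omI_root I hδ]
        apply Finset.sum_nonpos
        intro v _
        have := hrc v
        have h2 := (R.inner_self_alpha_pos v).le
        have h3 : (0:ℝ) ≤ (if v ∈ I then (1:ℝ) else 0) * (⟪R.α v, R.α v⟫ / 2) := by positivity
        exact mul_nonpos_of_nonpos_of_nonneg this h3
      linarith
    · rw [not_not] at hnp
      have hspan := (Finset.mem_filter.mp hnp).2
      rw [R.mem_span_sub_iff hδ] at hspan
      have : ⟪R.omI I, δ⟫ = 0 := by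
        rw [R.inner_omI_root I hδ]
        apply Finset.sum_eq_zero
        intro v _
        by_cases hv : v ∈ I
        · rw [hspan v (by simpa using hv), zero_mul]
        · rw [if_neg hv, zero_mul, mul_zero]
      linarith

end RootSystemBase

namespace RootSystemBase

variable (R : RootSystemBase n d)

/-- The vector `∑ c_u α_u` of a configuration. -/
def xvec (c : Fin n → ℤ) : EuclideanSpace ℝ (Fin d) := ∑ u, (c u : ℝ) • R.α u

lemma xvec_zero : R.xvec 0 = 0 := by simp [xvec]

lemma seqProd_nil : R.seqProd ([] : List (Fin n)) = 1 := rfl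

lemma seqProd_cons (v : Fin n) (l : List (Fin n)) :
    R.seqProd (v :: l) = R.seqProd l * R.sRefl v := by
  simp [seqProd]

lemma isW_seqProd (l : List (Fin n)) : R.IsW (R.seqProd l) := ⟨l.reverse, rfl⟩

lemma cartan_vv (v : Fin n) : (R.cartan v v : ℝ) = 2 := by
  rw [R.cartan_cast, rsPair_self (R.alpha_ne_zero v)]

lemma rsPair_xvec (I : Finset (Fin n)) (c : Fin n → ℤ) (v : Fin n) :
    rsPair (R.xvec c - R.omI I) (R.α v) = ((2 * c v - R.chipBound I c v : ℤ) : ℝ) := by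
  have h1 : rsPair (R.xvec c - R.omI I) (R.α v)
      = corootForm (R.α v) (R.xvec c) - corootForm (R.α v) (R.omI I) := by
    rw [← map_sub]; rfl
  have h2 : corootForm (R.α v) (R.xvec c) = ∑ u, (c u : ℝ) * (R.cartan u v : ℝ) := by
    rw [xvec, map_sum]
    exact Finset.sum_congr rfl fun u _ => by
      rw [map_smul, smul_eq_mul, corootForm_apply', R.cartan_cast]
  have h3 : corootForm (R.α v) (R.omI I) = (if v ∈ I then (1:ℝ) else 0) := by
    rw [corootForm_apply', R.rsPair_omI]
  have h4 : ∑ u, (c u : ℝ) * (R.cartan u v : ℝ)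
      = (c v : ℝ) * 2 + ∑ u ∈ Finset.univ.erase v, (c u : ℝ) * (R.cartan u v : ℝ) := by
    rw [← Finset.add_sum_erase _ _ (Finset.mem_univ v), R.cartan_vv]
  rw [h1, h2, h3, h4, chipBound]
  push_cast
  have h5 : ∑ u ∈ Finset.univ.erase v, (-(R.cartan u v : ℝ)) * (c u : ℝ)
      = -∑ u ∈ Finset.univ.erase v, (c u : ℝ) * (R.cartan u v : ℝ) := by
    rw [← Finset.sum_neg_distrib]
    exact Finset.sum_congr rfl fun u _ => by ring
  rw [h5]
  ring

lemma sad_iff_rsPair (I : Finset (Fin n)) (c : Fin n → ℤ) (v : Fin n) :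
    R.Sad I c v ↔ rsPair (R.xvec c - R.omI I) (R.α v) < 0 := by
  rw [R.rsPair_xvec, Sad]
  constructor
  · intro h
    have : (2 * c v - R.chipBound I c v : ℤ) < 0 := by omega
    exact_mod_cast this
  · intro h
    have : (2 * c v - R.chipBound I c v : ℤ) < 0 := by exact_mod_cast h
    omega

lemma rsPair_neg_iff (y : EuclideanSpace ℝ (Fin d)) (v : Fin n) :
    rsPair y (R.α v) < 0 ↔ ⟪y, R.α v⟫ < 0 := by
  have hA := R.inner_self_alpha_pos v
  rw [rsPair, div_neg_iff]
  constructor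
  · rintro (⟨h1, h2⟩ | ⟨h1, h2⟩) <;> linarith
  · intro h
    right
    exact ⟨by linarith, hA⟩

lemma xvec_update (c : Fin n → ℤ) (v : Fin n) (k : ℤ) :
    R.xvec (Function.update c v k) = R.xvec c + ((k - c v : ℤ) : ℝ) • R.α v := by
  rw [xvec, xvec, ← Finset.add_sum_erase _ _ (Finset.mem_univ v),
    ← Finset.add_sum_erase _ (fun u => ((c u : ℝ) • R.α u)) (Finset.mem_univ v)]
  have h1 : ∑ u ∈ Finset.univ.erase v, ((Function.update c v k u : ℤ) : ℝ) • R.α u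
      = ∑ u ∈ Finset.univ.erase v, (c u : ℝ) • R.α u :=
    Finset.sum_congr rfl fun u hu => by
      rw [Function.update_of_ne (Finset.ne_of_mem_erase hu)]
  rw [h1, Function.update_self]
  push_cast
  rw [sub_smul]
  abel

lemma fire_vec (I : Finset (Fin n)) (c : Fin n → ℤ) (v : Fin n) :
    R.xvec (R.fire I c v) - R.omI I = R.sRefl v (R.xvec c - R.omI I) := by
  rw [fire, R.xvec_update, R.sRefl_apply, R.rsPair_xvec]
  have h5 : ((R.chipBound I c v - c v - c v : ℤ) : ℝ)
      = -((2 * c v - R.chipBound I c v : ℤ) : ℝ) := by push_cast; ring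
  rw [h5, neg_smul]
  abel

lemma foldl_vec (I : Finset (Fin n)) (l : List (Fin n)) :
    ∀ c : Fin n → ℤ, R.xvec (l.foldl (R.fire I) c) - R.omI I
      = R.seqProd l (R.xvec c - R.omI I) := by
  induction l with
  | nil => intro c; rfl
  | cons v t ih =>
    intro c
    show R.xvec (t.foldl (R.fire I) (R.fire I c v)) - R.omI I = _
    rw [ih (R.fire I c v), R.fire_vec, R.seqProd_cons]
    rfl

lemma play_vec (I : Finset (Fin n)) (l : List (Fin n)) :
    R.xvec (R.play I l) - R.omI I = R.seqProd l (-(R.omI I)) := by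
  rw [play, R.foldl_vec, R.xvec_zero, zero_sub]

/-- Key step analysis of the game. -/
lemma validFrom_invS (I : Finset (Fin n)) (l : List (Fin n)) :
    ∀ (c : Fin n → ℤ) (w : EuclideanSpace ℝ (Fin d) ≃ₗ[ℝ] EuclideanSpace ℝ (Fin d)),
      R.IsW w → R.xvec c - R.omI I = w (-(R.omI I)) →
      R.invS w ⊆ R.posRoots \ R.parPos Iᶜ →
      R.ValidFrom I c l →
      R.invS (R.seqProd l * w) ⊆ R.posRoots \ R.parPos Iᶜ ∧
      (R.invS (R.seqProd l * w)).card = l.length + (R.invS w).card := by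
  induction l with
  | nil =>
    intro c w hw _ hsub _
    rw [R.seqProd_nil, one_mul]
    exact ⟨hsub, by simp⟩
  | cons v t ih =>
    rintro c w hw hx hsub ⟨hsad, hval⟩
    -- sadness gives w⁻¹ (α v) ∈ P
    have hlt : ⟪w (-(R.omI I)), R.α v⟫ < 0 := by
      have := (R.sad_iff_rsPair I c v).mp hsad
      rw [hx] at this
      exact (R.rsPair_neg_iff _ v).mp this
    set γ := w⁻¹ (R.α v) with hγ
    have hwγ : w γ = R.α v := IsW.apply_inv _
    have hγΦ : γ ∈ R.Φ := hw.inv.root_mem (R.α_mem v)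
    have hinner : ⟪w (-(R.omI I)), R.α v⟫ = -⟪R.omI I, γ⟫ := by
      rw [← hwγ, hw.inner, inner_neg_left]
    have hγP : γ ∈ R.posRoots \ R.parPos Iᶜ := by
      rw [R.mem_P_iff I hγΦ]
      rw [hinner] at hlt
      linarith
    have hγpos : γ ∈ R.posRoots := (Finset.mem_sdiff.mp hγP).1
    obtain ⟨hins, hnm⟩ := R.invS_left_pos hw v hγpos
    have hw' : R.IsW (R.sRefl v * w) := (R.isW_sRefl v).mul hw
    have hx' : R.xvec (R.fire I c v) - R.omI I = (R.sRefl v * w) (-(R.omI I)) := by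
      rw [R.fire_vec, hx]; rfl
    have hsub' : R.invS (R.sRefl v * w) ⊆ R.posRoots \ R.parPos Iᶜ := by
      rw [hins]
      exact Finset.insert_subset hγP hsub
    obtain ⟨h1, h2⟩ := ih (R.fire I c v) (R.sRefl v * w) hw' hx' hsub' hval
    have hmul : R.seqProd (v :: t) * w = R.seqProd t * (R.sRefl v * w) := by
      rw [R.seqProd_cons, mul_assoc]
    rw [hmul]
    refine ⟨h1, ?_⟩
    rw [h2, hins, Finset.card_insert_of_notMem hnm]
    simp only [List.length_cons]
    omega

lemma valid_facts (I : Finset (Fin n)) (l : List (Fin n)) (hv : R.Valid I l) :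
    R.invS (R.seqProd l) ⊆ R.posRoots \ R.parPos Iᶜ ∧
    (R.invS (R.seqProd l)).card = l.length := by
  have hx : R.xvec 0 - R.omI I = (1 : EuclideanSpace ℝ (Fin d) ≃ₗ[ℝ] _) (-(R.omI I)) := by
    rw [R.xvec_zero, zero_sub]; rfl
  have hsub : R.invS 1 ⊆ R.posRoots \ R.parPos Iᶜ := by
    rw [R.invS_one]; exact Finset.empty_subset _
  obtain ⟨h1, h2⟩ := R.validFrom_invS I l 0 1 R.isW_one hx hsub hv
  rw [mul_one] at h1 h2
  rw [R.invS_one] at h2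
  simp at h2
  exact ⟨h1, h2⟩

lemma maximal_invS (I : Finset (Fin n)) (l : List (Fin n)) (hm : R.MaximalSeq I l) :
    R.invS (R.seqProd l) = R.posRoots \ R.parPos Iᶜ ∧
    l.length = (R.posRoots \ R.parPos Iᶜ).card := by
  obtain ⟨hval, hnosad⟩ := hm
  obtain ⟨hsub, hcard⟩ := R.valid_facts I l hval
  set w := R.seqProd l with hwdef
  have hvec := R.play_vec I l
  have hge : ∀ v, 0 ≤ ⟪w (-(R.omI I)), R.α v⟫ := by
    intro v
    by_contra hcon
    push_neg at hcon
    apply hnosad v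
    rw [R.sad_iff_rsPair I _ v, hvec]
    exact (R.rsPair_neg_iff _ v).mpr hcon
  have hPsub : R.posRoots \ R.parPos Iᶜ ⊆ R.invS w := by
    intro γ hγ
    have hγpos : γ ∈ R.posRoots := (Finset.mem_sdiff.mp hγ).1
    have hγΦ : γ ∈ R.Φ := R.posRoots_subset hγpos
    have hwγΦ : w γ ∈ R.Φ := (R.isW_seqProd l).root_mem hγΦ
    rw [R.mem_invS]
    refine ⟨hγpos, ?_⟩
    have hneg : ⟪w (-(R.omI I)), w γ⟫ < 0 := by
      rw [(R.isW_seqProd l).inner, inner_neg_left]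
      have := (R.mem_P_iff I hγΦ).mp hγ
      linarith
    by_contra hcon
    have hwγpos : w γ ∈ R.posRoots := by
      rcases R.pos_or_neg hwγΦ with h | h
      · exact h
      · exact absurd h hcon
    have hrc := (R.mem_posRoots_iff hwγΦ).mp hwγpos
    have hsum : ⟪w (-(R.omI I)), w γ⟫ = ∑ u, R.rc (w γ) u * ⟪w (-(R.omI I)), R.α u⟫ := by
      conv_lhs => rw [R.rc_repr hwγΦ]
      rw [inner_sum]
      exact Finset.sum_congr rfl fun u _ => real_inner_smul_right _ _ _
    have : 0 ≤ ⟪w (-(R.omI I)), w γ⟫ := by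
      rw [hsum]
      exact Finset.sum_nonneg fun u _ => mul_nonneg (hrc u) (hge u)
    linarith
  have heq : R.invS w = R.posRoots \ R.parPos Iᶜ :=
    Finset.Subset.antisymm hsub hPsub
  exact ⟨heq, by rw [← hcard, heq]⟩

end RootSystemBase

namespace RootSystemBase

variable (R : RootSystemBase n d)

lemma validFrom_append (I : Finset (Fin n)) (l l' : List (Fin n)) :
    ∀ c : Fin n → ℤ, R.ValidFrom I c l → R.ValidFrom I (l.foldl (R.fire I) c) l' →
      R.ValidFrom I c (l ++ l') := by
  induction l with
  | nil => intro c _ h'; exact h'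
  | cons v t ih =>
    rintro c ⟨hsad, hrest⟩ h'
    exact ⟨hsad, ih (R.fire I c v) hrest h'⟩

lemma valid_nil (I : Finset (Fin n)) : R.Valid I [] := trivial

lemma exists_maximal (I : Finset (Fin n)) : ∃ l, R.MaximalSeq I l := by
  classical
  set S : Set ℕ := {k | ∃ l, R.Valid I l ∧ l.length = k} with hS
  have h0 : 0 ∈ S := ⟨[], R.valid_nil I, rfl⟩
  have hbdd : BddAbove S := by
    refine ⟨(R.posRoots \ R.parPos Iᶜ).card, ?_⟩
    rintro k ⟨l, hval, rfl⟩
    obtain ⟨hsub, hcard⟩ := R.valid_facts I l hval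
    rw [← hcard]
    exact Finset.card_le_card hsub
  have hmem := Nat.sSup_mem ⟨0, h0⟩ hbdd
  obtain ⟨l, hval, hlen⟩ := hmem
  refine ⟨l, hval, fun v hsad => ?_⟩
  have hval' : R.Valid I (l ++ [v]) := by
    apply R.validFrom_append I l [v] 0 hval
    exact ⟨hsad, trivial⟩
  have : l.length + 1 ∈ S := ⟨l ++ [v], hval', by simp⟩
  have hle := le_csSup hbdd this
  omega

lemma wordProd_mem_weyl (l : List (Fin n)) : R.wordProd l ∈ R.weyl := by
  induction l with
  | nil => exact one_mem _
  | cons i t ih =>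
    rw [R.wordProd_cons]
    exact mul_mem (Subgroup.subset_closure ⟨i, rfl⟩) ih

lemma isW_of_mem_weyl {w} (h : w ∈ R.weyl) : R.IsW w := by
  induction h using Subgroup.closure_induction with
  | mem x hx => obtain ⟨i, rfl⟩ := hx; exact R.isW_sRefl i
  | one => exact R.isW_one
  | mul x y _ _ hx hy => exact hx.mul hy
  | inv x _ hx => exact hx.inv

lemma len_lt_right {w} (hw : R.IsW w) (j : Fin n) (h : w (R.α j) ∈ R.posRoots) :
    R.len w < R.len (w * R.sRefl j) := by
  rw [R.len_eq_card hw, R.len_eq_card (hw.mul (R.isW_sRefl j)),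
    R.card_invS_right_pos hw j h]
  omega

lemma len_gt_right {w} (hw : R.IsW w) (j : Fin n) (h : -(w (R.α j)) ∈ R.posRoots) :
    R.len (w * R.sRefl j) < R.len w := by
  have := R.card_invS_right_neg hw j h
  rw [R.len_eq_card hw, R.len_eq_card (hw.mul (R.isW_sRefl j))]
  omega

lemma minReps_invS_subset {I : Finset (Fin n)} {w} (hw : w ∈ R.minReps I) :
    R.invS w ⊆ R.posRoots \ R.parPos Iᶜ := by
  have hIsW : R.IsW w := R.isW_of_mem_weyl hw.1
  intro γ hγinv
  have hγpos : γ ∈ R.posRoots := (R.mem_invS.mp hγinv).1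
  have hγneg : -(w γ) ∈ R.posRoots := (R.mem_invS.mp hγinv).2
  have hγΦ : γ ∈ R.Φ := R.posRoots_subset hγpos
  rw [Finset.mem_sdiff]
  refine ⟨hγpos, fun hγpar => ?_⟩
  -- γ ∈ Φ_J⁺ ; show w γ positive, contradiction
  have hwj : ∀ j, j ∉ I → w (R.α j) ∈ R.posRoots := by
    intro j hj
    rcases R.pos_or_neg (hIsW.root_mem (R.α_mem j)) with h | h
    · exact h
    · exfalso
      have h1 := hw.2 j hj
      have h2 := R.len_gt_right hIsW j h
      omega
  have hspan := (Finset.mem_filter.mp hγpar).2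
  rw [R.mem_span_sub_iff hγΦ] at hspan
  have hrcγ := (R.mem_posRoots_iff hγΦ).mp hγpos
  -- w γ = ∑_{j ∈ Iᶜ} rc γ j • w (α j)
  have hwγ : w γ = ∑ j ∈ Iᶜ, R.rc γ j • w (R.α j) := by
    conv_lhs => rw [R.rc_repr hγΦ]
    rw [map_sum]
    rw [← Finset.sum_subset (Finset.subset_univ Iᶜ)
      (fun u _ hu => by rw [map_smul, hspan u hu, zero_smul])]
    exact Finset.sum_congr rfl fun j _ => map_smul _ _ _
  have hrcwγ : ∀ u, 0 ≤ R.rc (w γ) u := by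
    intro u
    have : R.coordsL (w γ) = ∑ j ∈ Iᶜ, R.rc γ j • R.coordsL (w (R.α j)) := by
      rw [hwγ, map_sum]
      exact Finset.sum_congr rfl fun j _ => map_smul _ _ _
    have h2 : R.rc (w γ) u = ∑ j ∈ Iᶜ, R.rc γ j * R.rc (w (R.α j)) u := by
      rw [rc, this, Finset.sum_apply]
      rfl
    rw [h2]
    apply Finset.sum_nonneg
    intro j hj
    have hjI : j ∉ I := by simpa using hj
    exact mul_nonneg (hrcγ j) ((R.mem_posRoots_iff
      (hIsW.root_mem (R.α_mem j))).mp (hwj j hjI) u)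
  have hwγpos : w γ ∈ R.posRoots :=
    (R.mem_posRoots_iff (hIsW.root_mem hγΦ)).mpr hrcwγ
  exact R.not_pos_and_neg hwγpos hγneg

end RootSystemBase

theorem statement3' {n d : ℕ} (R : RootSystemBase n d) (I : Finset (Fin n)) :
    ∃ w0 : EuclideanSpace ℝ (Fin d) ≃ₗ[ℝ] EuclideanSpace ℝ (Fin d),
      w0 ∈ R.minReps I ∧
      (∀ w ∈ R.minReps I, R.len w ≤ R.len w0) ∧
      (∀ w ∈ R.minReps I, R.len w = R.len w0 → w = w0) ∧
      R.len w0 = (R.posRoots \ R.parPos Iᶜ).card ∧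
      (∀ l : List (Fin n), R.MaximalSeq I l →
        l.length = (R.posRoots \ R.parPos Iᶜ).card ∧ R.seqProd l = w0) ∧
      (∀ l l' : List (Fin n), R.MaximalSeq I l → R.MaximalSeq I l' →
        R.play I l = R.play I l') := by
  classical
  obtain ⟨l₀, hl₀⟩ := R.exists_maximal I
  set w0 := R.seqProd l₀ with hw0def
  obtain ⟨hinv0, hlen0⟩ := R.maximal_invS I l₀ hl₀
  have hIsW0 : R.IsW w0 := R.isW_seqProd l₀
  have hlenw0 : R.len w0 = (R.posRoots \ R.parPos Iᶜ).card := by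
    rw [R.len_eq_card hIsW0, hinv0]
  have hw0weyl : w0 ∈ R.weyl := R.wordProd_mem_weyl l₀.reverse
  have hw0mem : w0 ∈ R.minReps I := by
    refine ⟨hw0weyl, fun j hj => ?_⟩
    apply R.len_lt_right hIsW0
    apply R.pos_of_not_inv hIsW0 (R.alpha_mem_posRoots j)
    rw [hinv0, Finset.mem_sdiff]
    rintro ⟨-, hnp⟩
    apply hnp
    refine Finset.mem_filter.mpr ⟨R.alpha_mem_posRoots j, Submodule.subset_span ⟨j, ?_, rfl⟩⟩
    simpa using hj
  have hmax : ∀ w ∈ R.minReps I, R.len w ≤ R.len w0 := by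
    intro w hw
    rw [R.len_eq_card (R.isW_of_mem_weyl hw.1), hlenw0]
    exact Finset.card_le_card (R.minReps_invS_subset hw)
  have huniq : ∀ w ∈ R.minReps I, R.len w = R.len w0 → w = w0 := by
    intro w hw hlen
    have hIsW : R.IsW w := R.isW_of_mem_weyl hw.1
    have hcard : (R.posRoots \ R.parPos Iᶜ).card ≤ (R.invS w).card := by
      rw [← R.len_eq_card hIsW, hlen, hlenw0]
    have heq : R.invS w = R.posRoots \ R.parPos Iᶜ :=
      Finset.eq_of_subset_of_card_le (R.minReps_invS_subset hw) hcard
    exact R.eq_of_invS_eq hIsW hIsW0 (by rw [heq, hinv0])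
  have hseq : ∀ l : List (Fin n), R.MaximalSeq I l →
      l.length = (R.posRoots \ R.parPos Iᶜ).card ∧ R.seqProd l = w0 := by
    intro l hl
    obtain ⟨hinv, hlen⟩ := R.maximal_invS I l hl
    exact ⟨hlen, R.eq_of_invS_eq (R.isW_seqProd l) hIsW0 (by rw [hinv, hinv0])⟩
  refine ⟨w0, hw0mem, hmax, huniq, hlenw0, hseq, ?_⟩
  intro l l' hl hl'
  have h1 := (hseq l hl).2
  have h2 := (hseq l' hl').2
  have hv1 := R.play_vec I l
  have hv2 := R.play_vec I l'
  rw [h1] at hv1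
  rw [h2] at hv2
  have hxe : R.xvec (R.play I l) = R.xvec (R.play I l') := by
    have := hv1.trans hv2.symm
    have h3 := congrArg (fun x => x + R.omI I) this
    simpa [sub_add_cancel] using h3
  have hfun := R.combo_cancel (c := fun u => ((R.play I l u : ℤ) : ℝ))
    (c' := fun u => ((R.play I l' u : ℤ) : ℝ)) hxe
  funext u
  have := congrFun hfun u
  exact_mod_cast this

/-- Every maximal valid firing sequence has length `ℓ(w_0^J) = |Φ⁺ \\ Φ_J⁺|`,
where `w_0^J` is the unique longest element of `W^J`; all maximal sequences give the word
`w_0^J` and hence terminate in one and the same final configuration. -/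
theorem statement3 {n d : ℕ} (R : RootSystemBase n d) (I : Finset (Fin n)) :
    ∃ w0 : EuclideanSpace ℝ (Fin d) ≃ₗ[ℝ] EuclideanSpace ℝ (Fin d),
      w0 ∈ R.minReps I ∧
      (∀ w ∈ R.minReps I, R.len w ≤ R.len w0) ∧
      (∀ w ∈ R.minReps I, R.len w = R.len w0 → w = w0) ∧
      R.len w0 = (R.posRoots \ R.parPos Iᶜ).card ∧
      (∀ l : List (Fin n), R.MaximalSeq I l →
        l.length = (R.posRoots \ R.parPos Iᶜ).card ∧ R.seqProd l = w0) ∧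
      (∀ l l' : List (Fin n), R.MaximalSeq I l → R.MaximalSeq I l' →
        R.play I l = R.play I l') :=
  statement3' R I
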